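/- For each n ∈ ℕ, the set 𝔛_n of bi-infinite Bratteli diagrams B whose transition matrices F_k differ from the 1×1 matrix (2) for all k ≥ n is nowhere dense in the space ℶ of bi-infinite Bratteli diagrams with its cylinder topology. -/

import Mathlib

open Filter Topology

/-- A nonnegative-integer matrix of arbitrary (finite) size. -/
abbrev Mat := Σ m n : ℕ, Matrix (Fin m) (Fin n) ℕ

instance : TopologicalSpace Mat := ⊥
instance : DiscreteTopology Mat := ⟨rfl⟩

/-- Dimension compatibility for a bi-infinite sequence of transition matrices
(F_k is |V_k| × |V_{k-1}| for k ≥ 1, and the negative part is transposed; index 0 unused). -/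
def BethCompat (f : ℤ → Mat) : Prop :=
  (∀ k : ℤ, 1 ≤ k → (f k).1 = (f (k + 1)).2.1) ∧
  (∀ k : ℤ, k ≤ -1 → (f k).2.1 = (f (k - 1)).1) ∧
  (f 1).2.1 = (f (-1)).1

/-- The space ℶ of bi-infinite Bratteli diagrams, with the cylinder (product of discrete)
topology. -/
abbrev Beth := {f : ℤ → Mat // BethCompat f}

/-- The 1×1 matrix (2). -/
def Fbar : Mat := ⟨1, 1, fun _ _ => 2⟩

/-- for each n, the set 𝔛_n of bi-infinite Bratteli diagrams whose transition
matrices differ from the 1×1 matrix (2) at all indices k ≥ n is nowhere dense in ℶ. -/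
theorem Xn_nowhere_dense (n : ℕ) :
    IsNowhereDense {B : Beth | ∀ k : ℤ, (n : ℤ) ≤ k → B.1 k ≠ Fbar} := by
  set X : Set Beth := {B : Beth | ∀ k : ℤ, (n : ℤ) ≤ k → B.1 k ≠ Fbar} with hX
  have hcl : IsClosed X := by
    have hXeq : X = ⋂ k : ℤ, (fun B : Beth => B.1 k) ⁻¹' {M | (n : ℤ) ≤ k → M ≠ Fbar} := by
      ext B; simp [hX, Set.mem_iInter]
    rw [hXeq]
    exact isClosed_iInter fun k =>
      (isClosed_discrete _).preimage ((continuous_apply k).comp continuous_subtype_val)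
  rw [IsNowhereDense, hcl.closure_eq]
  rw [Set.eq_empty_iff_forall_notMem]
  intro x hx
  have hXnhds : X ∈ 𝓝 x := mem_interior_iff_mem_nhds.mp hx
  rw [nhds_induced] at hXnhds
  obtain ⟨S, hS, hSsub⟩ := hXnhds
  rw [nhds_pi] at hS
  obtain ⟨I, hIfin, t, ht, htsub⟩ := Filter.mem_pi.mp hS
  have htmem : ∀ i, x.1 i ∈ t i := by
    intro i
    have := ht i
    rw [nhds_discrete, Filter.mem_pure] at this
    exact this
  obtain ⟨M, hM⟩ := hIfin.bddAbove
  obtain ⟨N, hN1, hNn, hMN⟩ : ∃ N : ℤ, 2 ≤ N ∧ (n : ℤ) ≤ N ∧ M < N :=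
    ⟨max M (max (n : ℤ) 1) + 1, by
      have h1 := le_max_left M (max (n : ℤ) 1)
      have h3 := le_max_left (n : ℤ) 1
      have h4 := le_max_right (n : ℤ) 1
      have h5 := le_max_right M (max (n : ℤ) 1)
      omega⟩
  have hNM : ∀ i ∈ I, i < N := fun i hi => lt_of_le_of_lt (hM hi) hMN
  -- construct the modified sequence
  set y : ℤ → Mat := fun i =>
    if i < N then x.1 i else if i = N then ⟨1, (x.1 N).2.1, fun _ _ => 1⟩ else Fbar with hy
  have hyx : ∀ i, i < N → y i = x.1 i := by
    intro i hi; simp [hy, hi]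
  have hyN : y N = ⟨1, (x.1 N).2.1, fun _ _ => 1⟩ := by simp [hy]
  have hyF : ∀ i, N < i → y i = Fbar := by
    intro i hi
    simp only [hy]
    rw [if_neg (by omega), if_neg (by omega)]
  obtain ⟨hc1, hc2, hc3⟩ := x.2
  have hycompat : BethCompat y := by
    refine ⟨?_, ?_, ?_⟩
    · intro k hk
      rcases lt_trichotomy (k + 1) N with h | h | h
      · rw [hyx k (by omega), hyx (k + 1) h]
        exact hc1 k hk
      · have hkN : k < N := by omega
        rw [hyx k hkN, h, hyN]
        have := hc1 k hk
        rw [h] at this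
        exact this
      · rcases eq_or_lt_of_le (show N ≤ k by omega) with hke | hkl
        · rw [← hke, hyN, hyF (N + 1) (by omega)]
          rfl
        · rw [hyF k hkl, hyF (k + 1) (by omega)]
          rfl
    · intro k hk
      rw [hyx k (by omega), hyx (k - 1) (by omega)]
      exact hc2 k hk
    · rw [hyx 1 (by omega), hyx (-1) (by omega)]
      exact hc3
  set Y : Beth := ⟨y, hycompat⟩ with hY
  have hYS : Y ∈ Subtype.val ⁻¹' S := by
    apply htsub
    intro i hi
    have : y i = x.1 i := hyx i (hNM i hi)
    rw [hY]
    simp only [this]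
    exact htmem i
  have hYX : Y ∈ X := hSsub hYS
  have : y (N + 1) ≠ Fbar := hYX (N + 1) (by omega)
  exact this (hyF (N + 1) (by omega))
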